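/- Let f be a symmetric norm on ℝ^n and let ‖·‖_f be the induced unitarily invariant norm on B(H). The following are equivalent: (i) ‖·‖_f is submultiplicative, i.e., ‖AB‖_f ≤ ‖A‖_f · ‖B‖_f for all A, B ∈ B(H); (ii) ‖A‖_f ≥ s_1(A) for all A ∈ B(H); (iii) there exist unit vectors x, y ∈ H such that ‖x y*‖_f ≥ 1; (iv) f(e_1) ≥ 1. -/

import Mathlib

open scoped InnerProductSpace Pointwise

variable {H : Type*} [NormedAddCommGroup H] [InnerProductSpace ℂ H] [CompleteSpace H]

/-- The `k`-th singular value (1-indexed) of a bounded operator `A`: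
`s_k(A) = inf {‖A - X‖ : rank X < k}`. -/
noncomputable def sval (k : ℕ) (A : H →L[ℂ] H) : ℝ :=
  sInf { r : ℝ | ∃ X : H →L[ℂ] H,
    Module.rank ℂ (LinearMap.range (X : H →ₗ[ℂ] H)) < (k : Cardinal) ∧ r = ‖A - X‖ }

/-- `f : ℝ^n → ℝ` is a symmetric norm: a norm invariant under permutations of the
coordinates and under sign changes of the coordinates. -/
structure IsSymmetricNorm (n : ℕ) (f : (Fin n → ℝ) → ℝ) : Prop where
  triangle : ∀ x y, f (x + y) ≤ f x + f y
  homog : ∀ (t : ℝ) (x), f (t • x) = |t| * f x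
  definite : ∀ x, x ≠ 0 → 0 < f x
  perm_invariant : ∀ (σ : Equiv.Perm (Fin n)) (x), f (fun i => x (σ i)) = f x
  sign_invariant : ∀ (ε : Fin n → ℝ), (∀ i, ε i = 1 ∨ ε i = -1) →
    ∀ x, f (fun i => ε i * x i) = f x

/-- The unitarily invariant norm induced by a symmetric norm `f` on `ℝ^n`:
`‖A‖_f = f (s_1(A), …, s_n(A))`. -/
noncomputable def normf (n : ℕ) (f : (Fin n → ℝ) → ℝ) (A : H →L[ℂ] H) : ℝ :=
  f (fun j : Fin n => sval (j.1 + 1) A)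

/-- The rank-one operator `x y* : z ↦ ⟨z, y⟩ x` (inner product linear in `z`). -/
noncomputable def rankOne (x y : H) : H →L[ℂ] H :=
  (innerSL ℂ y).smulRight x

/-! ### Auxiliary lemmas about singular values -/

lemma svalSet_bddBelow (k : ℕ) (A : H →L[ℂ] H) :
    BddBelow { r : ℝ | ∃ X : H →L[ℂ] H,
      Module.rank ℂ (LinearMap.range (X : H →ₗ[ℂ] H)) < (k : Cardinal) ∧ r = ‖A - X‖ } :=
  ⟨0, by rintro r ⟨X, _, rfl⟩; positivity⟩

lemma norm_mem_svalSet {k : ℕ} (hk : 0 < k) (A : H →L[ℂ] H) :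
    ‖A‖ ∈ { r : ℝ | ∃ X : H →L[ℂ] H,
      Module.rank ℂ (LinearMap.range (X : H →ₗ[ℂ] H)) < (k : Cardinal) ∧ r = ‖A - X‖ } := by
  refine ⟨0, ?_, by rw [sub_zero]⟩
  have h0 : LinearMap.range (((0 : H →L[ℂ] H)) : H →ₗ[ℂ] H) = ⊥ := by
    simp
  rw [h0, rank_bot]
  exact_mod_cast hk

lemma sval_nonneg (k : ℕ) (A : H →L[ℂ] H) : 0 ≤ sval k A :=
  Real.sInf_nonneg (by rintro r ⟨X, _, rfl⟩; positivity)

lemma sval_one (A : H →L[ℂ] H) : sval 1 A = ‖A‖ := by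
  have hset : { r : ℝ | ∃ X : H →L[ℂ] H,
      Module.rank ℂ (LinearMap.range (X : H →ₗ[ℂ] H)) < ((1 : ℕ) : Cardinal) ∧ r = ‖A - X‖ }
      = {‖A‖} := by
    ext r
    simp only [Set.mem_setOf_eq, Set.mem_singleton_iff]
    constructor
    · rintro ⟨X, hX, rfl⟩
      rw [Nat.cast_one, Cardinal.lt_one_iff_zero] at hX
      have hbot : LinearMap.range (X : H →ₗ[ℂ] H) = ⊥ := Submodule.rank_eq_zero.mp hX
      have hX0 : (X : H →ₗ[ℂ] H) = 0 := LinearMap.range_eq_bot.mp hbot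
      have : X = 0 := by
        apply ContinuousLinearMap.coe_injective
        rw [hX0]; rfl
      rw [this, sub_zero]
    · rintro rfl
      exact norm_mem_svalSet Nat.one_pos A
  rw [sval, hset, csInf_singleton]

lemma sval_comp_le (k : ℕ) (hk : 0 < k) (A B : H →L[ℂ] H) :
    sval k (A ∘L B) ≤ ‖A‖ * sval k B := by
  have hSB : { r : ℝ | ∃ X : H →L[ℂ] H,
      Module.rank ℂ (LinearMap.range (X : H →ₗ[ℂ] H)) < (k : Cardinal) ∧ r = ‖B - X‖ }.Nonempty :=
    ⟨‖B‖, norm_mem_svalSet hk B⟩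
  have hmain : sval k (A ∘L B) ≤ sInf (‖A‖ • { r : ℝ | ∃ X : H →L[ℂ] H,
      Module.rank ℂ (LinearMap.range (X : H →ₗ[ℂ] H)) < (k : Cardinal) ∧ r = ‖B - X‖ }) := by
    apply le_csInf (hSB.smul_set)
    rintro r ⟨r', ⟨X, hX, rfl⟩, rfl⟩
    show sval k (A ∘L B) ≤ ‖A‖ • ‖B - X‖
    have hrank : Module.rank ℂ (LinearMap.range (((A ∘L X) : H →L[ℂ] H) : H →ₗ[ℂ] H))
        < (k : Cardinal) := by
      refine lt_of_le_of_lt ?_ hX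
      rw [ContinuousLinearMap.toLinearMap_comp, LinearMap.range_comp]
      exact rank_map_le _ _
    calc sval k (A ∘L B) ≤ ‖A ∘L B - A ∘L X‖ :=
          csInf_le (svalSet_bddBelow k (A ∘L B)) ⟨A ∘L X, hrank, rfl⟩
      _ = ‖A ∘L (B - X)‖ := by rw [ContinuousLinearMap.comp_sub]
      _ ≤ ‖A‖ * ‖B - X‖ := A.opNorm_comp_le (B - X)
      _ = ‖A‖ • ‖B - X‖ := rfl
  rw [Real.sInf_smul_of_nonneg (norm_nonneg A)] at hmain
  exact hmain

lemma sval_rankOne_zero {k : ℕ} (hk : 2 ≤ k) (x y : H) : sval k (rankOne x y) = 0 := by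
  refine le_antisymm ?_ (sval_nonneg k _)
  apply csInf_le (svalSet_bddBelow k _)
  refine ⟨rankOne x y, ?_, by rw [sub_self, norm_zero]⟩
  have h1 : LinearMap.range ((rankOne x y : H →L[ℂ] H) : H →ₗ[ℂ] H)
      ≤ Submodule.span ℂ {x} := by
    rintro w ⟨z, rfl⟩
    simp only [ContinuousLinearMap.coe_coe, rankOne, ContinuousLinearMap.smulRight_apply]
    exact Submodule.smul_mem _ _ (Submodule.mem_span_singleton_self x)
  have h2 : Module.rank ℂ (Submodule.span ℂ ({x} : Set H)) ≤ 1 := by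
    simpa using rank_span_le (R := ℂ) ({x} : Set H)
  refine lt_of_le_of_lt (le_trans (Submodule.rank_mono h1) h2) ?_
  exact_mod_cast (by omega : 1 < k)

lemma norm_rankOne (x y : H) : ‖rankOne x y‖ = ‖y‖ * ‖x‖ := by
  rw [rankOne, ContinuousLinearMap.norm_smulRight_apply, innerSL_apply_norm]

lemma rankOne_comp_self (x : H) (hx : ‖x‖ = 1) :
    rankOne x x ∘L rankOne x x = rankOne x x := by
  have hxx : ⟪x, x⟫_ℂ = 1 := by
    rw [inner_self_eq_norm_sq_to_K, hx]; norm_num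
  ext z
  simp only [ContinuousLinearMap.comp_apply, rankOne, ContinuousLinearMap.smulRight_apply,
    innerSL_apply_apply, inner_smul_right, hxx, mul_one]

/-! ### Auxiliary lemmas about symmetric norms -/

lemma symm_nonneg {n : ℕ} {f : (Fin n → ℝ) → ℝ} (hf : IsSymmetricNorm n f)
    (x : Fin n → ℝ) : 0 ≤ f x := by
  have h1 : f (-x) = f x := by simpa using hf.homog (-1) x
  have h0 : f 0 = 0 := by simpa using hf.homog 0 0
  have h2 := hf.triangle x (-x)
  rw [add_neg_cancel, h0, h1] at h2
  linarith

lemma symm_update_le {n : ℕ} {f : (Fin n → ℝ) → ℝ} (hf : IsSymmetricNorm n f)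
    (y : Fin n → ℝ) (i : Fin n) (t : ℝ) (ht : |t| ≤ y i) :
    f (Function.update y i t) ≤ f y := by
  rcases eq_or_lt_of_le ((abs_nonneg t).trans ht) with hy | hy
  · have ht0 : t = 0 := by
      have : |t| ≤ 0 := by rw [hy]; exact ht
      exact abs_eq_zero.mp (le_antisymm this (abs_nonneg t))
    rw [ht0, hy, Function.update_eq_self]
  · have hyne : y i ≠ 0 := ne_of_gt hy
    obtain ⟨hr1, hr2⟩ := abs_le.mp ht
    set a : ℝ := (y i + t) / (2 * y i) with ha_def
    set b : ℝ := (y i - t) / (2 * y i) with hb_def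
    have ha : 0 ≤ a := div_nonneg (by linarith) (by linarith)
    have hb : 0 ≤ b := div_nonneg (by linarith) (by linarith)
    have hab : a + b = 1 := by
      rw [ha_def, hb_def, ← add_div]
      field_simp
      ring
    set z : Fin n → ℝ := fun j => if j = i then -(y j) else y j with hz
    have hfz : f z = f y := by
      have hsgn := hf.sign_invariant (fun j => if j = i then -1 else 1)
        (fun j => by by_cases h : j = i <;> simp [h]) y
      rw [← hsgn]
      congr 1
      funext j
      by_cases h : j = i <;> simp [hz, h]
    have hupd : Function.update y i t = a • y + b • z := by
      funext j
      by_cases h : j = i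
      · subst h
        simp only [Function.update_self, Pi.add_apply, Pi.smul_apply, smul_eq_mul, hz,
          if_pos rfl, ↓reduceIte]
        rw [ha_def, hb_def]
        field_simp
        ring
      · simp only [Function.update_of_ne h, Pi.add_apply, Pi.smul_apply, smul_eq_mul, hz,
          if_neg h]
        have : a * y j + b * y j = (a + b) * y j := by ring
        rw [this, hab, one_mul]
    calc f (Function.update y i t) = f (a • y + b • z) := by rw [hupd]
      _ ≤ f (a • y) + f (b • z) := hf.triangle _ _
      _ = a * f y + b * f z := by
          rw [hf.homog, hf.homog, abs_of_nonneg ha, abs_of_nonneg hb]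
      _ = f y := by rw [hfz]; linear_combination (f y) * hab

lemma symm_mono {n : ℕ} {f : (Fin n → ℝ) → ℝ} (hf : IsSymmetricNorm n f) :
    ∀ x y : Fin n → ℝ, (∀ i, |x i| ≤ y i) → f x ≤ f y := by
  suffices h : ∀ k : ℕ, ∀ x y : Fin n → ℝ, (∀ i, |x i| ≤ y i) →
      (∀ i : Fin n, k ≤ i.1 → x i = y i) → f x ≤ f y by
    intro x y hxy
    exact h n x y hxy (fun i hi => absurd i.2 (by omega))
  intro k
  induction k with
  | zero =>
    intro x y _ h0
    rw [show x = y from funext fun i => h0 i (Nat.zero_le _)]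
  | succ k ih =>
    intro x y hxy hk
    by_cases hkn : k < n
    · set i : Fin n := ⟨k, hkn⟩ with hi
      have hyi : |x i| ≤ y i := hxy i
      have h2 : f (Function.update x i (y i)) ≤ f y := by
        apply ih
        · intro j
          by_cases h : j = i
          · subst h
            rw [Function.update_self, abs_of_nonneg ((abs_nonneg _).trans hyi)]
          · rw [Function.update_of_ne h]; exact hxy j
        · intro j hj
          by_cases h : j = i
          · subst h; rw [Function.update_self]
          · rw [Function.update_of_ne h]
            apply hk
            have : j.1 ≠ k := fun hc => h (Fin.ext hc)
            omega
      have h1 : f x ≤ f (Function.update x i (y i)) := by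
        have := symm_update_le hf (Function.update x i (y i)) i (x i)
          (by rw [Function.update_self]; exact hyi)
        rwa [Function.update_idem, Function.update_eq_self] at this
      exact h1.trans h2
    · exact ih x y hxy (fun i hi => hk i (by omega))

lemma single_smul_one {n : ℕ} (i : Fin n) (t : ℝ) :
    (Pi.single i t : Fin n → ℝ) = t • (Pi.single i 1 : Fin n → ℝ) := by
  funext j
  by_cases h : j = i
  · subst h; simp
  · simp [Pi.single_eq_of_ne h]

lemma normf_rankOne {n : ℕ} (hn : 0 < n) (f : (Fin n → ℝ) → ℝ) (x y : H)
    (hx : ‖x‖ = 1) (hy : ‖y‖ = 1) :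
    normf n f (rankOne x y) = f (Pi.single (⟨0, hn⟩ : Fin n) 1) := by
  unfold normf
  congr 1
  funext j
  by_cases h : j = (⟨0, hn⟩ : Fin n)
  · subst h
    rw [Pi.single_eq_same]
    show sval (0 + 1) (rankOne x y) = 1
    rw [show (0 + 1 : ℕ) = 1 from rfl, sval_one, norm_rankOne, hx, hy, one_mul]
  · rw [Pi.single_eq_of_ne h]
    apply sval_rankOne_zero
    have : j.1 ≠ 0 := fun hc => h (Fin.ext hc)
    omega

theorem stmt5 (n : ℕ) (hn : 0 < n) (hdim : (n : Cardinal) ≤ Module.rank ℂ H)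
    (f : (Fin n → ℝ) → ℝ) (hf : IsSymmetricNorm n f) :
    ((∀ A B : H →L[ℂ] H, normf n f (A ∘L B) ≤ normf n f A * normf n f B) ↔
        1 ≤ f (Pi.single (⟨0, hn⟩ : Fin n) 1 : Fin n → ℝ)) ∧
    ((∀ A : H →L[ℂ] H, sval 1 A ≤ normf n f A) ↔ 1 ≤ f (Pi.single (⟨0, hn⟩ : Fin n) 1 : Fin n → ℝ)) ∧
    ((∃ x y : H, ‖x‖ = 1 ∧ ‖y‖ = 1 ∧ 1 ≤ normf n f (rankOne x y)) ↔
        1 ≤ f (Pi.single (⟨0, hn⟩ : Fin n) 1 : Fin n → ℝ)) := by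
  set e1 : Fin n → ℝ := (Pi.single (⟨0, hn⟩ : Fin n) 1 : Fin n → ℝ) with he1
  have : Nontrivial H := rank_pos_iff_nontrivial.mp
    (lt_of_lt_of_le (by exact_mod_cast hn) hdim)
  obtain ⟨w, hw⟩ := exists_ne (0 : H)
  set u : H := ‖w‖⁻¹ • w with hu
  have hu1 : ‖u‖ = 1 := by
    rw [hu, norm_smul, norm_inv, norm_norm, inv_mul_cancel₀ (norm_ne_zero_iff.mpr hw)]
  have he1ne : e1 ≠ 0 := by
    intro hc
    have := congrFun hc ⟨0, hn⟩
    rw [he1, Pi.single_eq_same] at this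
    simpa using this
  have hfe1pos : 0 < f e1 := hf.definite _ he1ne
  -- (iv) → (ii)
  have iv_ii : 1 ≤ f e1 → ∀ A : H →L[ℂ] H, sval 1 A ≤ normf n f A := by
    intro h1 A
    have key : f (Pi.single (⟨0, hn⟩ : Fin n) (sval 1 A)) ≤ normf n f A := by
      apply symm_mono hf
      intro i
      by_cases h : i = (⟨0, hn⟩ : Fin n)
      · subst h
        rw [Pi.single_eq_same]
        show |sval 1 A| ≤ sval (0 + 1) A
        rw [abs_of_nonneg (sval_nonneg _ _)]
      · rw [Pi.single_eq_of_ne h]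
        simpa using sval_nonneg (i.1 + 1) A
    have hsingle : f (Pi.single (⟨0, hn⟩ : Fin n) (sval 1 A)) = |sval 1 A| * f e1 := by
      rw [single_smul_one, hf.homog, he1]
    calc sval 1 A = |sval 1 A| := (abs_of_nonneg (sval_nonneg _ _)).symm
      _ ≤ |sval 1 A| * f e1 := le_mul_of_one_le_right (abs_nonneg _) h1
      _ = f (Pi.single (⟨0, hn⟩ : Fin n) (sval 1 A)) := hsingle.symm
      _ ≤ normf n f A := key
  -- (ii) ↔ (iv)
  have h_ii : (∀ A : H →L[ℂ] H, sval 1 A ≤ normf n f A) ↔ 1 ≤ f e1 := by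
    constructor
    · intro h
      have hA := h (rankOne u u)
      rw [sval_one, norm_rankOne, hu1, one_mul, normf_rankOne hn f u u hu1 hu1] at hA
      exact hA
    · exact iv_ii
  -- (iii) ↔ (iv)
  have h_iii : (∃ x y : H, ‖x‖ = 1 ∧ ‖y‖ = 1 ∧ 1 ≤ normf n f (rankOne x y)) ↔ 1 ≤ f e1 := by
    constructor
    · rintro ⟨x, y, hx, hy, hxy⟩
      rwa [normf_rankOne hn f x y hx hy] at hxy
    · intro h1
      exact ⟨u, u, hu1, hu1, by rwa [normf_rankOne hn f u u hu1 hu1]⟩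
  -- (i) ↔ (iv)
  have h_i : (∀ A B : H →L[ℂ] H, normf n f (A ∘L B) ≤ normf n f A * normf n f B) ↔
      1 ≤ f e1 := by
    constructor
    · intro h
      have hc := h (rankOne u u) (rankOne u u)
      rw [rankOne_comp_self u hu1, normf_rankOne hn f u u hu1 hu1] at hc
      nlinarith [hfe1pos, hc]
    · intro h1 A B
      have step1 : normf n f (A ∘L B) ≤ ‖A‖ * normf n f B := by
        have hle : f (fun j : Fin n => sval (j.1 + 1) (A ∘L B))
            ≤ f (fun j : Fin n => ‖A‖ * sval (j.1 + 1) B) := by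
          apply symm_mono hf
          intro i
          rw [abs_of_nonneg (sval_nonneg _ _)]
          exact sval_comp_le (i.1 + 1) (Nat.succ_pos _) A B
        have heq : f (fun j : Fin n => ‖A‖ * sval (j.1 + 1) B) = ‖A‖ * normf n f B := by
          have hfun : (fun j : Fin n => ‖A‖ * sval (j.1 + 1) B)
              = ‖A‖ • (fun j : Fin n => sval (j.1 + 1) B) := rfl
          rw [hfun, hf.homog, abs_of_nonneg (norm_nonneg _)]
          rfl
        calc normf n f (A ∘L B) = f (fun j : Fin n => sval (j.1 + 1) (A ∘L B)) := rfl
          _ ≤ f (fun j : Fin n => ‖A‖ * sval (j.1 + 1) B) := hle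
          _ = ‖A‖ * normf n f B := heq
      have step2 : ‖A‖ ≤ normf n f A := by
        rw [← sval_one]; exact iv_ii h1 A
      have hB : 0 ≤ normf n f B := symm_nonneg hf _
      calc normf n f (A ∘L B) ≤ ‖A‖ * normf n f B := step1
        _ ≤ normf n f A * normf n f B := mul_le_mul_of_nonneg_right step2 hB
  exact ⟨h_i, h_ii, h_iii⟩
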